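/- For every α ≥ 1 there is a constant c = c(α) such that for all v, w ∈ ℝ: 𝔟_α[v,w] ≤ c·||v|^{α-1}v - |w|^{α-1}w|^{(α+1)/α}. -/

import Mathlib

open Real
open scoped NNReal

/-- Superadditivity of `x ^ p` for `p ≥ 1` on nonnegative reals. -/
lemma aux_add_rpow_le_rpow_add {p a b : ℝ} (ha : 0 ≤ a) (hb : 0 ≤ b) (hp : 1 ≤ p) :
    a ^ p + b ^ p ≤ (a + b) ^ p := by
  have h := NNReal.add_rpow_le_rpow_add a.toNNReal b.toNNReal hp
  have h2 := NNReal.coe_le_coe.2 h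
  push_cast [NNReal.coe_rpow, Real.coe_toNNReal a ha, Real.coe_toNNReal b hb] at h2
  exact h2

/-- `(x - y) ^ α ≤ x ^ α - y ^ α` for `0 ≤ y ≤ x`, `α ≥ 1`. -/
lemma aux_sub_rpow {α x y : ℝ} (hα : 1 ≤ α) (hy : 0 ≤ y) (hxy : y ≤ x) :
    (x - y) ^ α ≤ x ^ α - y ^ α := by
  have h := aux_add_rpow_le_rpow_add (sub_nonneg.2 hxy) hy hα
  rw [sub_add_cancel] at h
  linarith

/-- Power-mean style bound. -/
lemma aux_mixed {α u t : ℝ} (hα : 1 ≤ α) (hu : 0 ≤ u) (ht : 0 ≤ t) :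
    (u + t) ^ α ≤ 2 ^ α * (u ^ α + t ^ α) := by
  have hmax : u + t ≤ 2 * max u t := by
    rcases le_total u t with h | h
    · rw [max_eq_right h]; linarith
    · rw [max_eq_left h]; linarith
  have h1 : (u + t) ^ α ≤ (2 * max u t) ^ α :=
    Real.rpow_le_rpow (by linarith) hmax (by linarith)
  have h2 : (2 * max u t) ^ α = 2 ^ α * (max u t) ^ α :=
    Real.mul_rpow (by norm_num) (le_max_of_le_left hu)
  have h3 : (max u t) ^ α ≤ u ^ α + t ^ α := by
    rcases le_total u t with h | h
    · rw [max_eq_right h]; nlinarith [Real.rpow_nonneg hu α]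
    · rw [max_eq_left h]; nlinarith [Real.rpow_nonneg ht α]
  calc (u + t) ^ α ≤ 2 ^ α * (max u t) ^ α := by rw [← h2]; exact h1
    _ ≤ 2 ^ α * (u ^ α + t ^ α) := by
        have h4 : (0:ℝ) ≤ 2 ^ α := Real.rpow_nonneg (by norm_num) α
        nlinarith

/-- Signed power for nonnegative input. -/
lemma aux_signed_pow_nonneg {α v : ℝ} (hα : 1 ≤ α) (hv : 0 ≤ v) :
    |v| ^ (α - 1) * v = v ^ α := by
  rw [abs_of_nonneg hv]
  calc v ^ (α - 1) * v = v ^ (α - 1) * v ^ (1:ℝ) := by rw [Real.rpow_one]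
    _ = v ^ (α - 1 + 1) := (Real.rpow_add' hv (by intro hc; linarith [hc]; )).symm
    _ = v ^ α := by norm_num

lemma aux_signed_pow_neg (α v : ℝ) :
    |(-v)| ^ (α - 1) * (-v) = -(|v| ^ (α - 1) * v) := by
  rw [abs_neg]; ring

/-- Hölder-type: both nonneg. -/
lemma aux_L2_nonneg {α v w : ℝ} (hα : 1 ≤ α) (hv : 0 ≤ v) (hw : 0 ≤ w) (hvw : w ≤ v) :
    |v - w| ^ α ≤ 2 ^ α * |(|v| ^ (α - 1) * v) - (|w| ^ (α - 1) * w)| := by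
  have h2 : (1:ℝ) ≤ 2 ^ α := Real.one_le_rpow (by norm_num) (by linarith)
  rw [aux_signed_pow_nonneg hα hv, aux_signed_pow_nonneg hα hw]
  have hord : w ^ α ≤ v ^ α := Real.rpow_le_rpow hw hvw (by linarith)
  rw [abs_of_nonneg (by linarith : (0:ℝ) ≤ v - w), abs_of_nonneg (by linarith)]
  have h := aux_sub_rpow hα hw hvw
  nlinarith [Real.rpow_nonneg (sub_nonneg.2 hvw) α]

/-- Hölder-type: mixed signs. -/
lemma aux_L2_mixed {α v w : ℝ} (hα : 1 ≤ α) (hv : 0 ≤ v) (hw : w ≤ 0) :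
    |v - w| ^ α ≤ 2 ^ α * |(|v| ^ (α - 1) * v) - (|w| ^ (α - 1) * w)| := by
  set t := -w with ht
  have htn : 0 ≤ t := by rw [ht]; linarith
  have h1 : |v| ^ (α - 1) * v = v ^ α := aux_signed_pow_nonneg hα hv
  have h2 : |w| ^ (α - 1) * w = -(t ^ α) := by
    have h3 := aux_signed_pow_nonneg hα htn
    have hwt : w = -t := by rw [ht]; ring
    rw [hwt, aux_signed_pow_neg, h3]
  have hnn : 0 ≤ v ^ α + t ^ α :=
    add_nonneg (Real.rpow_nonneg hv α) (Real.rpow_nonneg htn α)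
  rw [h1, h2, sub_neg_eq_add, abs_of_nonneg hnn]
  have hvt : v - w = v + t := by rw [ht]; ring
  rw [hvt, abs_of_nonneg (by linarith)]
  exact aux_mixed hα hv htn

/-- Hölder continuity of the inverse signed power, raised form. -/
lemma aux_L2 {α : ℝ} (hα : 1 ≤ α) (v w : ℝ) :
    |v - w| ^ α ≤ 2 ^ α * |(|v| ^ (α - 1) * v) - (|w| ^ (α - 1) * w)| := by
  rcases le_total 0 v with hv | hv <;> rcases le_total 0 w with hw | hw
  · rcases le_total w v with hvw | hvw
    · exact aux_L2_nonneg hα hv hw hvw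
    · have h := aux_L2_nonneg hα hw hv hvw
      rwa [abs_sub_comm, abs_sub_comm (|w| ^ (α - 1) * w)] at h
  · exact aux_L2_mixed hα hv hw
  · have h := aux_L2_mixed hα hw hv
    rwa [abs_sub_comm, abs_sub_comm (|w| ^ (α - 1) * w)] at h
  · rcases le_total (-w) (-v) with hvw | hvw
    · have h := aux_L2_nonneg hα (by linarith : (0:ℝ) ≤ -v) (by linarith : (0:ℝ) ≤ -w) hvw
      rw [aux_signed_pow_neg, aux_signed_pow_neg] at h
      have e1 : |(-v) - (-w)| = |v - w| := by rw [abs_sub_comm]; congr 1; ring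
      have e2 : |(-(|v| ^ (α - 1) * v)) - (-(|w| ^ (α - 1) * w))| =
          |(|v| ^ (α - 1) * v) - (|w| ^ (α - 1) * w)| := by rw [abs_sub_comm]; congr 1; ring
      rwa [e1, e2] at h
    · have h := aux_L2_nonneg hα (by linarith : (0:ℝ) ≤ -w) (by linarith : (0:ℝ) ≤ -v) hvw
      rw [aux_signed_pow_neg, aux_signed_pow_neg] at h
      have e1 : |(-w) - (-v)| = |v - w| := by congr 1; ring
      have e2 : |(-(|w| ^ (α - 1) * w)) - (-(|v| ^ (α - 1) * v))| =
          |(|v| ^ (α - 1) * v) - (|w| ^ (α - 1) * w)| := by congr 1; ring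
      rwa [e1, e2] at h

/-- Nonnegativity of the Bregman divergence, via Young's inequality. -/
lemma aux_bregman_nonneg {α : ℝ} (hα : 1 ≤ α) (v w : ℝ) :
    0 ≤ (1 / (α + 1)) * (|v| ^ (α + 1) - |w| ^ (α + 1)) + (|w| ^ (α - 1) * w) * (w - v) := by
  have hα0 : (0:ℝ) < α := by linarith
  have hα1 : (0:ℝ) < α + 1 := by linarith
  have hconj : (α + 1).HolderConjugate ((α + 1) / α) := by
    rw [Real.holderConjugate_iff]
    constructor
    · linarith
    · field_simp
      ring
  have hyoung := Real.young_inequality_of_nonneg (abs_nonneg v) (Real.rpow_nonneg (abs_nonneg w) α)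
    hconj
  have hpow1 : |w| ^ (α - 1) * |w| = |w| ^ α := by
    calc |w| ^ (α - 1) * |w| = |w| ^ (α - 1) * |w| ^ (1:ℝ) := by rw [Real.rpow_one]
      _ = |w| ^ (α - 1 + 1) := (Real.rpow_add' (abs_nonneg w) (by norm_num; linarith)).symm
      _ = |w| ^ α := by norm_num
  have hww : (|w| ^ (α - 1) * w) * w = |w| ^ (α + 1) := by
    have hsq : w * w = |w| * |w| := by rw [abs_mul_abs_self]
    calc (|w| ^ (α - 1) * w) * w = |w| ^ (α - 1) * |w| * |w| := by rw [mul_assoc, hsq]; ring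
      _ = |w| ^ α * |w| ^ (1:ℝ) := by rw [hpow1, Real.rpow_one]
      _ = |w| ^ (α + 1) := (Real.rpow_add' (abs_nonneg w) (by linarith)).symm
  have hwv : (|w| ^ (α - 1) * w) * v ≤ |w| ^ α * |v| := by
    calc (|w| ^ (α - 1) * w) * v ≤ |(|w| ^ (α - 1) * w) * v| := le_abs_self _
      _ = |w| ^ (α - 1) * |w| * |v| := by
          rw [abs_mul, abs_mul, abs_of_nonneg (Real.rpow_nonneg (abs_nonneg w) _)]
      _ = |w| ^ α * |v| := by rw [hpow1]
  have hq : (|w| ^ α) ^ ((α + 1) / α) = |w| ^ (α + 1) := by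
    rw [← Real.rpow_mul (abs_nonneg w)]
    congr 1
    field_simp
  rw [hq] at hyoung
  have key : (|w| ^ (α - 1) * w) * v ≤ |v| ^ (α + 1) / (α + 1) + |w| ^ (α + 1) / ((α + 1) / α) :=
    le_trans hwv (by linarith [hyoung])
  have hdiv : |w| ^ (α + 1) / ((α + 1) / α) = α * |w| ^ (α + 1) / (α + 1) := by
    rw [div_div_eq_mul_div]; ring
  rw [hdiv] at key
  have expand : (1 / (α + 1)) * (|v| ^ (α + 1) - |w| ^ (α + 1)) + (|w| ^ (α - 1) * w) * (w - v)
      = |v| ^ (α + 1) / (α + 1) - |w| ^ (α + 1) / (α + 1) + |w| ^ (α + 1)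
        - (|w| ^ (α - 1) * w) * v := by
    rw [mul_sub (|w| ^ (α - 1) * w), hww]; ring
  rw [expand]
  have hsum : |w| ^ (α + 1) / (α + 1) + α * |w| ^ (α + 1) / (α + 1) = |w| ^ (α + 1) := by
    field_simp
    ring
  linarith

theorem bregman_le_signed_power_diff_pow (α : ℝ) (hα : 1 ≤ α) :
    ∃ c : ℝ, 0 < c ∧ ∀ v w : ℝ,
      (1 / (α + 1)) * (|w| ^ (α + 1) - |v| ^ (α + 1)) +
          (|v| ^ (α - 1) * v) * (v - w) ≤
        c * |(|v| ^ (α - 1) * v) - (|w| ^ (α - 1) * w)| ^ ((α + 1) / α) := by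
  have hα0 : (0:ℝ) < α := by linarith
  refine ⟨2, by norm_num, fun v w => ?_⟩
  set a := |v| ^ (α - 1) * v with ha
  set b := |w| ^ (α - 1) * w with hb
  have hD := aux_bregman_nonneg hα v w
  rw [← hb] at hD
  have h1 : (1 / (α + 1)) * (|w| ^ (α + 1) - |v| ^ (α + 1)) + a * (v - w)
      ≤ (a - b) * (v - w) := by
    have hid : (a - b) * (v - w)
        - ((1 / (α + 1)) * (|w| ^ (α + 1) - |v| ^ (α + 1)) + a * (v - w))
        = (1 / (α + 1)) * (|v| ^ (α + 1) - |w| ^ (α + 1)) + b * (w - v) := by ring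
    linarith
  rcases eq_or_ne a b with hab | hab
  · rw [hab, sub_self, abs_zero, Real.zero_rpow (by positivity), mul_zero]
    rw [hab] at h1
    have : (b - b) * (v - w) = 0 := by ring
    linarith
  · have habs : (0:ℝ) < |a - b| := abs_pos.2 (sub_ne_zero.2 hab)
    have hL2 := aux_L2 hα v w
    rw [← ha, ← hb] at hL2
    have h3 : |v - w| ≤ 2 * |a - b| ^ (α⁻¹) := by
      have hstep : (|v - w| ^ α) ^ (α⁻¹) ≤ (2 ^ α * |a - b|) ^ (α⁻¹) :=
        Real.rpow_le_rpow (by positivity) hL2 (by positivity)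
      rw [Real.rpow_rpow_inv (abs_nonneg _) (ne_of_gt hα0)] at hstep
      rwa [Real.mul_rpow (by positivity) (le_of_lt habs),
        Real.rpow_rpow_inv (by norm_num) (ne_of_gt hα0)] at hstep
    have h2 : (a - b) * (v - w) ≤ |a - b| * |v - w| := by
      rw [← abs_mul]; exact le_abs_self _
    have h4 : |a - b| * |v - w| ≤ |a - b| * (2 * |a - b| ^ (α⁻¹)) :=
      mul_le_mul_of_nonneg_left h3 (le_of_lt habs)
    have h5 : |a - b| * (2 * |a - b| ^ (α⁻¹)) = 2 * |a - b| ^ ((α + 1) / α) := by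
      rw [show (α + 1) / α = 1 + α⁻¹ by field_simp,
        Real.rpow_add habs, Real.rpow_one]
      ring
    calc (1 / (α + 1)) * (|w| ^ (α + 1) - |v| ^ (α + 1)) + a * (v - w)
        ≤ (a - b) * (v - w) := h1
      _ ≤ |a - b| * |v - w| := h2
      _ ≤ 2 * |a - b| ^ ((α + 1) / α) := by rw [← h5]; exact h4
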